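/- In ℝ², let c = (2, 2), ρ_k = 1 + (k+1)²/2 and α_k = 1 + 3/(k+1) for k ≥ 0, and let clamp : ℝ² → ℝ² act componentwise by clamp(w)_i = max(−1, min(1, w_i)). Let x^0 = (0, 0) and z^0 ∈ ℝ² with ‖z^0‖_∞ ≤ 1, and define recursively x^{k+1} = (1 + 1/ρ_k) x^k − (1/ρ_k) z^k + (1/ρ_k) c and z^{k+1} = clamp((z^k + x^{k+1})/α_k). Then each coordinate sequence ((x^k)_i)_{k≥0} is nondecreasing (indeed (x^{k+1})_i ≥ (x^k)_i + 1/ρ_k) and converges to a limit x̄_i with 1/ρ_0 ≤ x̄_i ≤ 75; moreover, for every accumulation point z̄ of the bounded sequence (z^k)_{k≥0} and for i ∈ {1, 2} it holds z̄_i − x̄_i < 2; in particular z̄ − x̄ ≠ c, so the limit fails the KKT condition c = z̄ − x̄ of the problem of Example 4.4. -/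
import Mathlib


open Filter

/-- For the iteration of Example 4.4 of the paper, each coordinate of
`x^k` is nondecreasing (with `(x^{k+1})_i ≥ (x^k)_i + 1/ρ_k`) and converges to a limit
`x̄_i ∈ [1/ρ_0, 75]`; moreover every accumulation point `z̄` of `(z^k)` satisfies
`z̄_i − x̄_i < 2` for `i ∈ {1,2}`, hence `z̄ − x̄ ≠ c = (2,2)` and the limit fails the KKT
condition. -/
theorem stmt_9 (x z : ℕ → Fin 2 → ℝ) (ρ a : ℕ → ℝ)
    (hρ : ∀ k, ρ k = 1 + ((k : ℝ) + 1) ^ 2 / 2)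
    (ha : ∀ k, a k = 1 + 3 / ((k : ℝ) + 1))
    (hx0 : ∀ i, x 0 i = 0)
    (hz0 : ∀ i, |z 0 i| ≤ 1)
    (hx : ∀ k i, x (k + 1) i = (1 + 1 / ρ k) * x k i - (1 / ρ k) * z k i + (1 / ρ k) * 2)
    (hz : ∀ k i, z (k + 1) i = max (-1) (min 1 ((z k i + x (k + 1) i) / a k))) :
    (∀ k i, x k i + 1 / ρ k ≤ x (k + 1) i) ∧
    ∃ xbar : Fin 2 → ℝ,
      (∀ i, Tendsto (fun k => x k i) atTop (nhds (xbar i)) ∧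
        1 / ρ 0 ≤ xbar i ∧ xbar i ≤ 75) ∧
      ∀ zbar : Fin 2 → ℝ,
        (∃ φ : ℕ → ℕ, StrictMono φ ∧
          ∀ i, Tendsto (fun k => z (φ k) i) atTop (nhds (zbar i))) →
        (∀ i, zbar i - xbar i < 2) ∧ (fun i => zbar i - xbar i) ≠ (fun _ => (2 : ℝ)) := by
  -- positivity of ρ
  have hρpos : ∀ k, (0:ℝ) < ρ k := by
    intro k; rw [hρ]; positivity
  -- z bounded in [-1,1]
  have hz1 : ∀ k i, z k i ≤ 1 := by
    intro k i
    cases k with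
    | zero => exact (abs_le.mp (hz0 i)).2
    | succ n => rw [hz]; exact max_le (by norm_num) (min_le_left _ _)
  have hzm1 : ∀ k i, -1 ≤ z k i := by
    intro k i
    cases k with
    | zero => exact (abs_le.mp (hz0 i)).1
    | succ n => rw [hz]; exact le_max_left _ _
  -- nonnegativity of x, together with the increment bound
  have hstep : ∀ k i, 0 ≤ x k i → x k i + 1 / ρ k ≤ x (k + 1) i := by
    intro k i hnn
    rw [hx]
    have h1 := hz1 k i
    have hp := hρpos k
    have hinv : 0 < 1 / ρ k := by positivity
    nlinarith [mul_nonneg hinv.le hnn, mul_le_mul_of_nonneg_left h1 hinv.le]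
  have hxnn : ∀ k i, 0 ≤ x k i := by
    intro k i
    induction k with
    | zero => exact (hx0 i).ge
    | succ n ih =>
      have := hstep n i ih
      have hinv : 0 < 1 / ρ n := by have := hρpos n; positivity
      linarith
  have hmono : ∀ k i, x k i + 1 / ρ k ≤ x (k + 1) i := fun k i => hstep k i (hxnn k i)
  -- upper bound via exponential of partial sums
  have hub : ∀ k i, x k i + 3 ≤ 3 * Real.exp (∑ j ∈ Finset.range k, 1 / ρ j) := by
    intro k i
    induction k with
    | zero => simp [hx0]
    | succ n ih =>
      rw [Finset.sum_range_succ, Real.exp_add, hx]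
      have e1 : 1 / ρ n + 1 ≤ Real.exp (1 / ρ n) := Real.add_one_le_exp _
      have hzm := hzm1 n i
      have hp := hρpos n
      have hinv : 0 < 1 / ρ n := by positivity
      have hxn := hxnn n i
      have hepos := Real.exp_pos (∑ j ∈ Finset.range n, 1 / ρ j)
      nlinarith [mul_le_mul_of_nonneg_left ih (by linarith : (0:ℝ) ≤ 1 / ρ n),
        mul_le_mul_of_nonneg_right e1 (by linarith : (0:ℝ) ≤ 3 * Real.exp (∑ j ∈ Finset.range n, 1 / ρ j)),
        mul_le_mul_of_nonneg_left hzm hinv.le]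
  -- partial sums bounded by 3
  have hS : ∀ k, ∑ j ∈ Finset.range k, 1 / ρ j ≤ 3 := by
    have key : ∀ k : ℕ, ∑ j ∈ Finset.range (k + 1), 1 / ρ j ≤ 8 / 3 - 2 / ((k : ℝ) + 1) := by
      intro k
      induction k with
      | zero =>
        rw [Finset.sum_range_one, hρ]
        norm_num
      | succ n ih =>
        rw [Finset.sum_range_succ]
        have h1 : 1 / ρ (n + 1) ≤ 2 / ((n : ℝ) + 1) - 2 / ((n : ℝ) + 2) := by
          rw [hρ]
          have hn : (0:ℝ) < (n:ℝ) + 1 := by positivity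
          have hn2 : (0:ℝ) < (n:ℝ) + 2 := by positivity
          rw [div_sub_div _ _ (ne_of_gt hn) (ne_of_gt hn2), div_le_div_iff₀ (by positivity) (by positivity)]
          push_cast
          nlinarith
        push_cast
        push_cast at ih
        have h2 : (2:ℝ)/((n:ℝ)+1+1) = 2/((n:ℝ)+2) := by ring_nf
        linarith
    intro k
    cases k with
    | zero => simp
    | succ n =>
      have := key n
      have hn : (0:ℝ) < (n:ℝ) + 1 := by positivity
      have : (0:ℝ) < 2 / ((n:ℝ) + 1) := by positivity
      linarith [key n]
  have hexp3 : Real.exp 3 ≤ 26 := by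
    have h := Real.exp_one_lt_d9
    have h3 : Real.exp 3 = Real.exp 1 * Real.exp 1 * Real.exp 1 := by
      rw [← Real.exp_add, ← Real.exp_add]; norm_num
    nlinarith [Real.exp_pos 1]
  have hbd : ∀ k i, x k i ≤ 75 := by
    intro k i
    have h1 := hub k i
    have h2 : Real.exp (∑ j ∈ Finset.range k, 1 / ρ j) ≤ Real.exp 3 := Real.exp_le_exp.mpr (hS k)
    nlinarith
  refine ⟨hmono, fun i => ⨆ k, x k i, ?_, ?_⟩
  · intro i
    have hmon : Monotone fun k => x k i := by
      apply monotone_nat_of_le_succ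
      intro k
      have := hmono k i
      have : 0 < 1 / ρ k := by have := hρpos k; positivity
      linarith [hmono k i]
    have hbdd : BddAbove (Set.range fun k => x k i) := by
      refine ⟨75, ?_⟩
      rintro _ ⟨k, rfl⟩
      exact hbd k i
    refine ⟨tendsto_atTop_ciSup hmon hbdd, ?_, ciSup_le fun k => hbd k i⟩
    have h1 : 1 / ρ 0 ≤ x 1 i := by
      have := hmono 0 i
      rw [hx0 i] at this
      linarith
    exact le_trans h1 (le_ciSup hbdd 1)
  · rintro zbar ⟨φ, hφ, hlim⟩
    have hxbar : ∀ i, (2:ℝ)/3 ≤ ⨆ k, x k i := by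
      intro i
      have hbdd : BddAbove (Set.range fun k => x k i) := ⟨75, by rintro _ ⟨k, rfl⟩; exact hbd k i⟩
      have h1 : 1 / ρ 0 ≤ x 1 i := by
        have := hmono 0 i
        rw [hx0 i] at this
        linarith
      have hρ0 : ρ 0 = 3/2 := by rw [hρ]; norm_num
      have : (2:ℝ)/3 ≤ x 1 i := by rw [hρ0] at h1; linarith [h1]
      exact le_trans this (le_ciSup hbdd 1)
    have hzbar : ∀ i, zbar i ≤ 1 := by
      intro i
      exact le_of_tendsto (hlim i) (Eventually.of_forall fun k => hz1 (φ k) i)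
    constructor
    · intro i
      have := hxbar i
      have := hzbar i
      linarith
    · intro h
      have h0 := congrFun h 0
      simp only at h0
      have := hxbar 0
      have := hzbar 0
      linarith
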